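/- Let Σ be a symmetric positive definite n×n real matrix, T a symmetric n×n real matrix, k_B > 0, define F(Ω) := Tr(Ω Σ⁻¹ Ωᵀ) + k_B Tr(Ω Σ⁻¹ T), and let Ω* := (k_B/2) 𝓛_{Σ⁻¹}(Σ⁻¹T − TΣ⁻¹) be the unique skew-symmetric solution of Σ⁻¹Ω + ΩΣ⁻¹ = (k_B/2)(Σ⁻¹T − TΣ⁻¹). Then for every skew-symmetric n×n matrix Ω one has F(Ω) ≥ F(Ω*), with equality if and only if Ω = Ω*; i.e., Ω* is the unique maximizer of the steady-state power output P = −F(Ω)/γ over all skew-symmetric couplings. -/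

import Mathlib

open Matrix MeasureTheory

attribute [local instance] Matrix.linftyOpNormedAddCommGroup Matrix.linftyOpNormedSpace

attribute [local instance] Matrix.linftyOpNormedRing Matrix.linftyOpNormedAlgebra

noncomputable instance matCENorm {n : ℕ} :
    @ContinuousENorm (Matrix (Fin n) (Fin n) ℝ) instTopologicalSpaceMatrix :=
  SeminormedAddGroup.toContinuousENorm

instance matPMS {n : ℕ} :
    @TopologicalSpace.PseudoMetrizableSpace (Matrix (Fin n) (Fin n) ℝ) instTopologicalSpaceMatrix :=
  inferInstanceAs (TopologicalSpace.PseudoMetrizableSpace (Fin n → Fin n → ℝ))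

/-- The Bochner integral `∫₀^∞ exp(-τA) X exp(-τA) dτ` of matrix-valued functions. -/
noncomputable def lyapInt {n : ℕ} (A X : Matrix (Fin n) (Fin n) ℝ) : Matrix (Fin n) (Fin n) ℝ :=
  ∫ τ in Set.Ioi (0 : ℝ), NormedSpace.exp (-(τ • A)) * X * NormedSpace.exp (-(τ • A))

open NormedSpace Set Filter

variable {n : ℕ}

noncomputable def mulLCLM (A : Matrix (Fin n) (Fin n) ℝ) :
    Matrix (Fin n) (Fin n) ℝ →L[ℝ] Matrix (Fin n) (Fin n) ℝ :=
  (LinearMap.mulLeft ℝ A).toContinuousLinearMap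

noncomputable def mulRCLM (A : Matrix (Fin n) (Fin n) ℝ) :
    Matrix (Fin n) (Fin n) ℝ →L[ℝ] Matrix (Fin n) (Fin n) ℝ :=
  (LinearMap.mulRight ℝ A).toContinuousLinearMap

noncomputable def transCLM :
    Matrix (Fin n) (Fin n) ℝ →L[ℝ] Matrix (Fin n) (Fin n) ℝ :=
  LinearMap.toContinuousLinearMap
    { toFun := Matrix.transpose
      map_add' := Matrix.transpose_add
      map_smul' := Matrix.transpose_smul }

@[simp] lemma mulLCLM_apply (A B : Matrix (Fin n) (Fin n) ℝ) : mulLCLM A B = A * B := rfl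
@[simp] lemma mulRCLM_apply (A B : Matrix (Fin n) (Fin n) ℝ) : mulRCLM A B = B * A := rfl
@[simp] lemma transCLM_apply (B : Matrix (Fin n) (Fin n) ℝ) : transCLM B = Bᵀ := rfl

lemma exp_bound {n : ℕ} (A : Matrix (Fin n) (Fin n) ℝ) (hA : A.PosDef) :
    ∃ C μ : ℝ, 0 < μ ∧ 0 ≤ C ∧ ∀ τ : ℝ, 0 ≤ τ →
      ‖exp (τ • (-A))‖ ≤ C * Real.exp (-(μ * τ)) := by
  rcases Nat.eq_zero_or_pos n with hn | hn
  · refine ⟨0, 1, one_pos, le_refl _, fun τ hτ => ?_⟩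
    subst hn
    have h0 : (exp (τ • (-A)) : Matrix (Fin 0) (Fin 0) ℝ) = 0 := Subsingleton.elim _ _
    rw [h0]
    simp
  · have : Nonempty (Fin n) := Fin.pos_iff_nonempty.mp hn
    have hH := hA.isHermitian
    set U : Matrix (Fin n) (Fin n) ℝ := (hH.eigenvectorUnitary : Matrix (Fin n) (Fin n) ℝ) with hUdef
    have hUmem : U ∈ Matrix.unitaryGroup (Fin n) ℝ := (hH.eigenvectorUnitary).2
    have hU1 : U * star U = 1 := (Matrix.mem_unitaryGroup_iff).mp hUmem
    have hU2 : star U * U = 1 := (Matrix.mem_unitaryGroup_iff').mp hUmem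
    have hUunit : IsUnit U := ⟨⟨U, star U, hU1, hU2⟩, rfl⟩
    have hUinv : U⁻¹ = star U := Matrix.inv_eq_left_inv hU2
    set eig := hH.eigenvalues with heigdef
    set μ := Finset.univ.inf' Finset.univ_nonempty eig with hμdef
    have hμpos : 0 < μ := by
      rw [hμdef, Finset.lt_inf'_iff]
      exact fun i _ => hA.eigenvalues_pos i
    refine ⟨‖U‖ * ‖star U‖, μ, hμpos, by positivity, fun τ hτ => ?_⟩
    have hspec : A = U * diagonal eig * star U := by
      have h := hH.spectral_theorem
      simpa [hUdef, heigdef, Function.comp] using h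
    have hconj : τ • (-A) = U * diagonal (fun i => τ * (-eig i)) * U⁻¹ := by
      rw [hUinv, hspec]
      ext i j
      simp [Matrix.mul_apply, Matrix.diagonal, Finset.mul_sum, mul_comm, mul_left_comm]
      exact Finset.sum_congr rfl fun k _ => by ring
    rw [hconj, Matrix.exp_conj U _ hUunit, Matrix.exp_diagonal, hUinv]
    have h1 : ‖U * diagonal (exp fun i => τ * -eig i) * star U‖ ≤
        ‖U‖ * ‖diagonal (exp fun i => τ * -eig i)‖ * ‖star U‖ :=
      le_trans (Matrix.linfty_opNorm_mul _ _)
        (mul_le_mul_of_nonneg_right (Matrix.linfty_opNorm_mul _ _) (norm_nonneg _))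
    have h2 : ‖diagonal (exp fun i => τ * -eig i)‖ ≤ Real.exp (-(μ * τ)) := by
      rw [Matrix.linfty_opNorm_diagonal]
      rw [pi_norm_le_iff_of_nonneg (Real.exp_nonneg _)]
      intro i
      have : exp (τ * -eig i) = Real.exp (τ * -eig i) := by
        rw [Real.exp_eq_exp_ℝ]
      rw [Pi.coe_exp, this, Real.norm_eq_abs, abs_of_pos (Real.exp_pos _), Real.exp_le_exp]
      have hle : μ ≤ eig i := Finset.inf'_le _ (Finset.mem_univ i)
      nlinarith
    calc ‖U * diagonal (exp fun i => τ * -eig i) * star U‖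
        ≤ ‖U‖ * ‖diagonal (exp fun i => τ * -eig i)‖ * ‖star U‖ := h1
      _ ≤ ‖U‖ * Real.exp (-(μ * τ)) * ‖star U‖ := by
          gcongr
      _ = ‖U‖ * ‖star U‖ * Real.exp (-(μ * τ)) := by ring

lemma exp_cont (A : Matrix (Fin n) (Fin n) ℝ) :
    Continuous fun τ : ℝ => exp (τ • (-A)) :=
  exp_continuous.comp (continuous_id.smul continuous_const)

lemma lyap_integrable (A : Matrix (Fin n) (Fin n) ℝ) (hA : A.PosDef)
    (X : Matrix (Fin n) (Fin n) ℝ) :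
    IntegrableOn (fun τ : ℝ => exp (τ • (-A)) * X * exp (τ • (-A))) (Set.Ioi 0) := by
  obtain ⟨C, μ, hμ, hC, hbound⟩ := exp_bound A hA
  have cont : Continuous fun τ : ℝ => exp (τ • (-A)) * X * exp (τ • (-A)) :=
    ((exp_cont A).mul continuous_const).mul (exp_cont A)
  have hg : IntegrableOn (fun τ : ℝ => (C * ‖X‖ * C) * Real.exp (-(2 * μ) * τ)) (Set.Ioi 0) :=
    (exp_neg_integrableOn_Ioi 0 (by linarith)).const_mul _
  refine Integrable.mono' hg cont.aestronglyMeasurable.restrict ?_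
  rw [ae_restrict_iff' measurableSet_Ioi]
  refine Filter.Eventually.of_forall fun τ hτ => ?_
  have hτ' : (0:ℝ) ≤ τ := le_of_lt hτ
  have hb := hbound τ hτ'
  calc ‖exp (τ • (-A)) * X * exp (τ • (-A))‖
      ≤ ‖exp (τ • (-A)) * X‖ * ‖exp (τ • (-A))‖ := Matrix.linfty_opNorm_mul _ _
    _ ≤ ‖exp (τ • (-A))‖ * ‖X‖ * ‖exp (τ • (-A))‖ := by
        gcongr; exact Matrix.linfty_opNorm_mul _ _
    _ ≤ (C * Real.exp (-(μ * τ))) * ‖X‖ * (C * Real.exp (-(μ * τ))) := by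
        gcongr <;> exact hb
    _ = (C * ‖X‖ * C) * Real.exp (-(2 * μ) * τ) := by
        rw [show -(2 * μ) * τ = -(μ * τ) + -(μ * τ) by ring, Real.exp_add]; ring

lemma lyap_tendsto (A : Matrix (Fin n) (Fin n) ℝ) (hA : A.PosDef)
    (X : Matrix (Fin n) (Fin n) ℝ) :
    Tendsto (fun τ : ℝ => exp (τ • (-A)) * X * exp (τ • (-A))) atTop (nhds 0) := by
  obtain ⟨C, μ, hμ, hC, hbound⟩ := exp_bound A hA
  have hg : Tendsto (fun τ : ℝ => (C * ‖X‖ * C) * Real.exp (-(2 * μ) * τ)) atTop (nhds 0) := by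
    have h1 : Tendsto (fun τ : ℝ => -(2 * μ) * τ) atTop atBot := by
      exact Filter.Tendsto.const_mul_atTop_of_neg (by linarith) tendsto_id
    have := Real.tendsto_exp_atBot.comp h1
    simpa using this.const_mul (C * ‖X‖ * C)
  apply squeeze_zero_norm' _ hg
  filter_upwards [Filter.eventually_ge_atTop (0:ℝ)] with τ hτ
  have hb := hbound τ hτ
  calc ‖exp (τ • (-A)) * X * exp (τ • (-A))‖
      ≤ ‖exp (τ • (-A)) * X‖ * ‖exp (τ • (-A))‖ := Matrix.linfty_opNorm_mul _ _
    _ ≤ ‖exp (τ • (-A))‖ * ‖X‖ * ‖exp (τ • (-A))‖ := by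
        gcongr; exact Matrix.linfty_opNorm_mul _ _
    _ ≤ (C * Real.exp (-(μ * τ))) * ‖X‖ * (C * Real.exp (-(μ * τ))) := by
        gcongr <;> exact hb
    _ = (C * ‖X‖ * C) * Real.exp (-(2 * μ) * τ) := by
        rw [show -(2 * μ) * τ = -(μ * τ) + -(μ * τ) by ring, Real.exp_add]; ring

lemma lyapInt_eq (A X : Matrix (Fin n) (Fin n) ℝ) :
    lyapInt A X = ∫ τ in Set.Ioi (0 : ℝ), exp (τ • (-A)) * X * exp (τ • (-A)) := by
  unfold lyapInt
  simp_rw [smul_neg]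

lemma lyap_eq (A : Matrix (Fin n) (Fin n) ℝ) (hA : A.PosDef) (X : Matrix (Fin n) (Fin n) ℝ) :
    A * lyapInt A X + lyapInt A X * A = X := by
  have hInt := lyap_integrable A hA X
  set f : ℝ → Matrix (Fin n) (Fin n) ℝ := fun τ => exp (τ • (-A)) * X * exp (τ • (-A)) with hf
  have hderiv : ∀ τ ∈ Set.Ici (0:ℝ),
      HasDerivAt f (-((mulLCLM A) (f τ) + (mulRCLM A) (f τ))) τ := by
    intro τ _
    have h1 : HasDerivAt (fun t : ℝ => exp (t • (-A))) ((-A) * exp (τ • (-A))) τ :=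
      hasDerivAt_exp_smul_const' (-A) τ
    have h2 : HasDerivAt (fun t : ℝ => exp (t • (-A))) (exp (τ • (-A)) * (-A)) τ :=
      hasDerivAt_exp_smul_const (-A) τ
    have h3 := (h1.mul_const X).mul h2
    refine h3.congr_deriv ?_
    show _ = -(A * (exp (τ • (-A)) * X * exp (τ • (-A))) + exp (τ • (-A)) * X * exp (τ • (-A)) * A)
    noncomm_ring
  have hf'int : IntegrableOn
      (fun τ => -((mulLCLM A) (f τ) + (mulRCLM A) (f τ))) (Set.Ioi 0) :=
    (((mulLCLM A).integrable_comp hInt).add ((mulRCLM A).integrable_comp hInt)).neg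
  have htend : Tendsto f atTop (nhds 0) := lyap_tendsto A hA X
  have key := integral_Ioi_of_hasDerivAt_of_tendsto' hderiv hf'int htend
  have hf0 : f 0 = X := by
    simp [hf]
  have hsplit : (∫ τ in Set.Ioi (0:ℝ), -((mulLCLM A) (f τ) + (mulRCLM A) (f τ)))
      = -((mulLCLM A) (∫ τ in Set.Ioi (0:ℝ), f τ) + (mulRCLM A) (∫ τ in Set.Ioi (0:ℝ), f τ)) := by
    rw [integral_neg]
    congr 1
    exact (integral_add ((mulLCLM A).integrable_comp hInt) ((mulRCLM A).integrable_comp hInt)).trans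
      (congrArg₂ (· + ·) (ContinuousLinearMap.integral_comp_comm _ hInt)
        (ContinuousLinearMap.integral_comp_comm _ hInt))
  rw [hsplit, hf0] at key
  rw [lyapInt_eq]
  have := neg_eq_iff_eq_neg.mp key
  simp only [mulLCLM_apply, mulRCLM_apply] at this
  rw [this]
  abel

lemma lyap_skew (A : Matrix (Fin n) (Fin n) ℝ) (hA : A.PosDef)
    (X : Matrix (Fin n) (Fin n) ℝ) (hX : Xᵀ = -X) :
    (lyapInt A X)ᵀ = -(lyapInt A X) := by
  have hInt := lyap_integrable A hA X
  have hAt : Aᵀ = A := by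
    have := hA.isHermitian
    simpa [Matrix.IsHermitian, Matrix.conjTranspose_eq_transpose_of_trivial] using this
  have hft : ∀ τ : ℝ, (exp (τ • (-A)) * X * exp (τ • (-A)))ᵀ
      = -(exp (τ • (-A)) * X * exp (τ • (-A))) := by
    intro τ
    have het : (exp (τ • (-A)))ᵀ = exp (τ • (-A)) := by
      rw [← Matrix.exp_transpose, Matrix.transpose_smul, Matrix.transpose_neg, hAt]
    rw [Matrix.transpose_mul, Matrix.transpose_mul, het, hX]
    noncomm_ring
  rw [lyapInt_eq]
  calc (∫ τ in Set.Ioi (0:ℝ), exp (τ • (-A)) * X * exp (τ • (-A)))ᵀ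
      = transCLM (∫ τ in Set.Ioi (0:ℝ), exp (τ • (-A)) * X * exp (τ • (-A))) := rfl
    _ = ∫ τ in Set.Ioi (0:ℝ), transCLM (exp (τ • (-A)) * X * exp (τ • (-A))) :=
        (ContinuousLinearMap.integral_comp_comm _ hInt).symm
    _ = ∫ τ in Set.Ioi (0:ℝ), -(exp (τ • (-A)) * X * exp (τ • (-A))) := by
        simp_rw [transCLM_apply]
        exact integral_congr_ae (Filter.Eventually.of_forall fun τ => hft τ)
    _ = -(∫ τ in Set.Ioi (0:ℝ), exp (τ • (-A)) * X * exp (τ • (-A))) := integral_neg _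

lemma diag_conj (A Δ : Matrix (Fin n) (Fin n) ℝ) (i : Fin n) :
    (Δ * A * Δᵀ) i i = star (Δ i) ⬝ᵥ (A *ᵥ (Δ i)) := by
  simp only [Matrix.mul_apply, Matrix.transpose_apply, Matrix.mulVec, dotProduct,
    star_trivial, Finset.sum_mul, Finset.mul_sum]
  rw [Finset.sum_comm]
  exact Finset.sum_congr rfl fun j _ => Finset.sum_congr rfl fun k _ => by ring

lemma trace_conj_nonneg (A : Matrix (Fin n) (Fin n) ℝ) (hA : A.PosDef)
    (Δ : Matrix (Fin n) (Fin n) ℝ) : 0 ≤ (Δ * A * Δᵀ).trace := by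
  rw [Matrix.trace]
  refine Finset.sum_nonneg fun i _ => ?_
  rw [Matrix.diag_apply, diag_conj]
  exact hA.posSemidef.dotProduct_mulVec_nonneg (Δ i)

lemma trace_conj_eq_zero_iff (A : Matrix (Fin n) (Fin n) ℝ) (hA : A.PosDef)
    (Δ : Matrix (Fin n) (Fin n) ℝ) : (Δ * A * Δᵀ).trace = 0 ↔ Δ = 0 := by
  constructor
  · intro h
    rw [Matrix.trace] at h
    have hterm : ∀ i ∈ Finset.univ, (0:ℝ) ≤ (Δ * A * Δᵀ).diag i := fun i _ => by
      rw [Matrix.diag_apply, diag_conj]; exact hA.posSemidef.dotProduct_mulVec_nonneg (Δ i)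
    have hall := (Finset.sum_eq_zero_iff_of_nonneg hterm).mp h
    ext i j
    by_contra hne
    have hrow : Δ i ≠ 0 := fun h0 => hne (by rw [show Δ i j = 0 from by rw [h0]; rfl]; rfl)
    have := hA.dotProduct_mulVec_pos hrow
    have hzero := hall i (Finset.mem_univ i)
    rw [Matrix.diag_apply, diag_conj] at hzero
    rw [hzero] at this
    exact lt_irrefl 0 this
  · intro h
    rw [h]
    simp

lemma trace_skew_right {Δ M : Matrix (Fin n) (Fin n) ℝ} (hΔ : Δᵀ = -Δ) :
    (Δ * M).trace = -((Δ * Mᵀ).trace) := by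
  conv_lhs => rw [← Matrix.trace_transpose, Matrix.transpose_mul, hΔ, Matrix.mul_neg,
    Matrix.trace_neg, Matrix.trace_mul_comm]

/-- `Ω* = (k_B/2) 𝓛_{S⁻¹}(S⁻¹T - TS⁻¹)` is the unique minimizer of
`F(Ω) = Tr(ΩS⁻¹Ωᵀ) + k_B Tr(ΩS⁻¹T)` over skew-symmetric matrices, i.e. the unique maximizer
of the steady-state power output `P = -F(Ω)/γ`. -/
theorem optimal_coupling_is_minimizer {n : ℕ} (S T : Matrix (Fin n) (Fin n) ℝ) (k_B : ℝ)
    (hS : S.PosDef) (hT : T.IsHermitian) (hkB : 0 < k_B) :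
    ∀ Ω : Matrix (Fin n) (Fin n) ℝ, Ωᵀ = -Ω →
      ((((k_B / 2) • lyapInt S⁻¹ (S⁻¹ * T - T * S⁻¹)) * S⁻¹ *
            ((k_B / 2) • lyapInt S⁻¹ (S⁻¹ * T - T * S⁻¹))ᵀ).trace +
          k_B * (((k_B / 2) • lyapInt S⁻¹ (S⁻¹ * T - T * S⁻¹)) * S⁻¹ * T).trace ≤
        (Ω * S⁻¹ * Ωᵀ).trace + k_B * (Ω * S⁻¹ * T).trace) ∧
      ((Ω * S⁻¹ * Ωᵀ).trace + k_B * (Ω * S⁻¹ * T).trace =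
          (((k_B / 2) • lyapInt S⁻¹ (S⁻¹ * T - T * S⁻¹)) * S⁻¹ *
              ((k_B / 2) • lyapInt S⁻¹ (S⁻¹ * T - T * S⁻¹))ᵀ).trace +
            k_B * (((k_B / 2) • lyapInt S⁻¹ (S⁻¹ * T - T * S⁻¹)) * S⁻¹ * T).trace ↔
        Ω = (k_B / 2) • lyapInt S⁻¹ (S⁻¹ * T - T * S⁻¹)) := by
  intro Ω hΩ
  have hA : (S⁻¹).PosDef := hS.inv
  have hAt : (S⁻¹)ᵀ = S⁻¹ := by
    have := hA.isHermitian
    simpa [Matrix.IsHermitian, Matrix.conjTranspose_eq_transpose_of_trivial] using this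
  have hTt : Tᵀ = T := by
    simpa [Matrix.IsHermitian, Matrix.conjTranspose_eq_transpose_of_trivial] using hT
  have hX : (S⁻¹ * T - T * S⁻¹)ᵀ = -(S⁻¹ * T - T * S⁻¹) := by
    rw [Matrix.transpose_sub, Matrix.transpose_mul, Matrix.transpose_mul, hAt, hTt]
    abel
  set L : Matrix (Fin n) (Fin n) ℝ := lyapInt S⁻¹ (S⁻¹ * T - T * S⁻¹) with hLdef
  set W : Matrix (Fin n) (Fin n) ℝ := (k_B / 2) • L with hWdef
  have hLskew : Lᵀ = -L := lyap_skew _ hA _ hX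
  have hLyap : S⁻¹ * L + L * S⁻¹ = S⁻¹ * T - T * S⁻¹ := lyap_eq _ hA _
  have hW : Wᵀ = -W := by rw [hWdef, Matrix.transpose_smul, hLskew, smul_neg]
  have hWLyap : S⁻¹ * W + W * S⁻¹ = (k_B / 2) • (S⁻¹ * T - T * S⁻¹) := by
    rw [hWdef, Matrix.mul_smul, Matrix.smul_mul, ← smul_add, hLyap]
  set Δ : Matrix (Fin n) (Fin n) ℝ := Ω - W with hΔdef
  have hΔt : Δᵀ = -Δ := by
    rw [hΔdef, Matrix.transpose_sub, hΩ, hW]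
    abel
  have hΩeq : Ω = W + Δ := by rw [hΔdef]; abel
  have hcross : (W * S⁻¹ * Δᵀ).trace + (Δ * S⁻¹ * Wᵀ).trace
      + k_B * (Δ * S⁻¹ * T).trace = 0 := by
    have h1 : (W * S⁻¹ * Δᵀ).trace = -((Δ * (W * S⁻¹)).trace) := by
      rw [hΔt, Matrix.mul_neg, Matrix.trace_neg, Matrix.trace_mul_comm]
    have h2 : (Δ * S⁻¹ * Wᵀ).trace = -((Δ * (S⁻¹ * W)).trace) := by
      rw [hW, Matrix.mul_neg, Matrix.trace_neg, Matrix.mul_assoc]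
    have h3 : (Δ * (S⁻¹ * W)).trace + (Δ * (W * S⁻¹)).trace
        = (k_B / 2) * ((Δ * (S⁻¹ * T)).trace - (Δ * (T * S⁻¹)).trace) := by
      rw [← Matrix.trace_add, ← Matrix.mul_add, hWLyap, Matrix.mul_smul, Matrix.trace_smul,
        Matrix.mul_sub, Matrix.trace_sub]
      simp
    have h4 : (Δ * (T * S⁻¹)).trace = -((Δ * (S⁻¹ * T)).trace) := by
      have h := trace_skew_right (M := T * S⁻¹) hΔt
      rwa [Matrix.transpose_mul, hAt, hTt] at h
    have h5 : (Δ * S⁻¹ * T).trace = (Δ * (S⁻¹ * T)).trace := by rw [Matrix.mul_assoc]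
    rw [h1, h2, h5]
    linear_combination (-1 : ℝ) * h3 + (k_B/2) * h4
  have hexp : (Ω * S⁻¹ * Ωᵀ).trace = (W * S⁻¹ * Wᵀ).trace + (W * S⁻¹ * Δᵀ).trace
      + (Δ * S⁻¹ * Wᵀ).trace + (Δ * S⁻¹ * Δᵀ).trace := by
    rw [hΩeq, Matrix.transpose_add, Matrix.add_mul, Matrix.add_mul, Matrix.mul_add,
      Matrix.mul_add, Matrix.trace_add, Matrix.trace_add, Matrix.trace_add]
    ring
  have hexp2 : (Ω * S⁻¹ * T).trace = (W * S⁻¹ * T).trace + (Δ * S⁻¹ * T).trace := by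
    rw [hΩeq, Matrix.add_mul, Matrix.add_mul, Matrix.trace_add]
  have hkey : (Ω * S⁻¹ * Ωᵀ).trace + k_B * (Ω * S⁻¹ * T).trace
      = ((W * S⁻¹ * Wᵀ).trace + k_B * (W * S⁻¹ * T).trace) + (Δ * S⁻¹ * Δᵀ).trace := by
    rw [hexp, hexp2]
    linear_combination hcross
  have hpos := trace_conj_nonneg _ hA Δ
  refine ⟨by linarith, ?_, ?_⟩
  · intro h
    have ht : (Δ * S⁻¹ * Δᵀ).trace = 0 := by linarith
    have hΔ0 : Δ = 0 := (trace_conj_eq_zero_iff _ hA Δ).mp ht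
    have : Ω - W = 0 := by rw [← hΔdef]; exact hΔ0
    rw [sub_eq_zero] at this
    exact this
  · intro h
    have hΔ0 : Δ = 0 := by rw [hΔdef, h]; exact sub_self _
    have ht : (Δ * S⁻¹ * Δᵀ).trace = 0 := by rw [hΔ0]; simp
    linarith
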